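/- Let X be a finite-dimensional real normed space and let S := span{v ⊗ v : v ∈ X} ⊆ X ⊗[ℝ] X be the subspace of symmetric tensors, with X × S carrying its (unique) finite-dimensional Hausdorff vector-space topology. For every u ∈ X and every ε > 0, the convex hull of the set {(u + v, (u + v) ⊗ (u + v)) : v ∈ X, ‖v‖ ≤ ε}, regarded as a subset of X × S, has nonempty interior. -/

import Mathlib

open scoped TensorProduct

/-- The subspace of symmetric tensors, spanned by the squares `v ⊗ v`. -/
noncomputable def symTensorSpan (X : Type*) [AddCommGroup X] [Module ℝ X] :
    Submodule ℝ (X ⊗[ℝ] X) :=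
  Submodule.span ℝ {w : X ⊗[ℝ] X | ∃ v : X, w = v ⊗ₜ[ℝ] v}

section Aux

variable {X : Type*} [NormedAddCommGroup X] [NormedSpace ℝ X]

lemma symTensorSpan_def :
    symTensorSpan X = Submodule.span ℝ {w : X ⊗[ℝ] X | ∃ v : X, w = v ⊗ₜ[ℝ] v} := rfl

/-- The square `v ⊗ v` as an element of `symTensorSpan X`. -/
noncomputable def sqElem (v : X) : ↥(symTensorSpan X) :=
  ⟨v ⊗ₜ[ℝ] v, Submodule.subset_span ⟨v, rfl⟩⟩

@[simp] lemma sqElem_coe (v : X) : ((sqElem v : ↥(symTensorSpan X)) : X ⊗[ℝ] X) = v ⊗ₜ[ℝ] v :=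
  rfl

lemma span_sq_top :
    Submodule.span ℝ {σ : ↥(symTensorSpan X) | ∃ v : X, σ = sqElem v} = ⊤ := by
  apply Submodule.map_injective_of_injective (symTensorSpan X).injective_subtype
  rw [Submodule.map_span, Submodule.map_top, Submodule.range_subtype]
  have hs : (symTensorSpan X).subtype '' {σ : ↥(symTensorSpan X) | ∃ v : X, σ = sqElem v}
      = {w : X ⊗[ℝ] X | ∃ v : X, w = v ⊗ₜ[ℝ] v} := by
    ext w
    constructor
    · rintro ⟨σ, ⟨v, rfl⟩, rfl⟩
      exact ⟨v, rfl⟩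
    · rintro ⟨v, rfl⟩
      exact ⟨sqElem v, ⟨v, rfl⟩, rfl⟩
  rw [hs]
  exact symTensorSpan_def.symm

variable (u : X) (ε : ℝ)

/-- The set in the statement. -/
def diagSet : Set (X × ↥(symTensorSpan X)) :=
  {p : X × ↥(symTensorSpan X) | ∃ v : X, ‖v‖ ≤ ε ∧ p.1 = u + v ∧
    (p.2 : X ⊗[ℝ] X) = (u + v) ⊗ₜ[ℝ] (u + v)}

lemma mem_diagSet {v : X} (hv : ‖v‖ ≤ ε) : (u + v, sqElem (u + v)) ∈ diagSet u ε :=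
  ⟨v, hv, rfl, rfl⟩

variable (hε : 0 < ε)

include hε in
lemma diff_mem {v : X} (hv : ‖v‖ ≤ ε) :
    (v, sqElem (u + v) - sqElem u) ∈ vectorSpan ℝ (diagSet u ε) := by
  have h := vsub_mem_vectorSpan ℝ (mem_diagSet u ε hv)
      (mem_diagSet u ε (v := 0) (by simpa using le_of_lt hε))
  simpa using h

include hε in
lemma sq_small_mem {v : X} (hv : ‖v‖ ≤ ε) :
    ((0 : X), sqElem v) ∈ vectorSpan ℝ (diagSet u ε) := by
  have h1 := diff_mem u ε hε hv
  have h2 := diff_mem u ε hε (v := -v) (by simpa using hv)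
  have h3 := Submodule.add_mem _ h1 h2
  have key : (v, sqElem (u + v) - sqElem u) + (-v, sqElem (u + -v) - sqElem u)
      = (2 : ℝ) • ((0 : X), sqElem v) := by
    apply Prod.ext
    · simp
    · apply Subtype.ext
      simp only [Prod.snd_add, Submodule.coe_add, Submodule.coe_sub, Prod.smul_snd,
        SetLike.val_smul, sqElem_coe, TensorProduct.tmul_add, TensorProduct.add_tmul,
        TensorProduct.tmul_neg, TensorProduct.neg_tmul, two_smul]
      abel
  rw [key] at h3
  have := Submodule.smul_mem _ ((2 : ℝ)⁻¹) h3
  rwa [smul_smul, inv_mul_cancel₀ (by norm_num), one_smul] at this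

include hε in
lemma sq_mem (v : X) : ((0 : X), sqElem v) ∈ vectorSpan ℝ (diagSet u ε) := by
  set t : ℝ := ε / (‖v‖ + 1) with ht
  have hvnorm : (0 : ℝ) < ‖v‖ + 1 := by positivity
  have htpos : 0 < t := div_pos hε hvnorm
  have hsmall : ‖t • v‖ ≤ ε := by
    rw [norm_smul, Real.norm_eq_abs, abs_of_pos htpos, ht, div_mul_eq_mul_div,
      div_le_iff₀ hvnorm, mul_comm]
    nlinarith [norm_nonneg v]
  have h := Submodule.smul_mem _ ((t ^ 2)⁻¹) (sq_small_mem u ε hε hsmall)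
  have key : ((t ^ 2)⁻¹ : ℝ) • (((0 : X), sqElem (t • v)) : X × ↥(symTensorSpan X))
      = ((0 : X), sqElem v) := by
    apply Prod.ext
    · simp
    · apply Subtype.ext
      simp only [Prod.smul_snd, SetLike.val_smul, sqElem_coe]
      rw [← TensorProduct.smul_tmul', TensorProduct.tmul_smul, smul_smul, smul_smul]
      rw [show (t ^ 2)⁻¹ * t * t = 1 by
        field_simp, one_smul]
  rwa [key] at h

include hε in
lemma snd_mem (σ : ↥(symTensorSpan X)) :
    ((0 : X), σ) ∈ vectorSpan ℝ (diagSet u ε) := by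
  have hsub : Submodule.span ℝ {σ : ↥(symTensorSpan X) | ∃ v : X, σ = sqElem v} ≤
      (vectorSpan ℝ (diagSet u ε)).comap (LinearMap.inr ℝ X ↥(symTensorSpan X)) := by
    rw [Submodule.span_le]
    rintro σ' ⟨v, rfl⟩
    simpa using sq_mem u ε hε v
  rw [span_sq_top] at hsub
  simpa using hsub (Submodule.mem_top (x := σ))

include hε in
lemma fst_mem (x : X) : ((x : X), (0 : ↥(symTensorSpan X))) ∈ vectorSpan ℝ (diagSet u ε) := by
  set t : ℝ := ε / (‖x‖ + 1) with ht
  have hvnorm : (0 : ℝ) < ‖x‖ + 1 := by positivity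
  have htpos : 0 < t := div_pos hε hvnorm
  have hsmall : ‖t • x‖ ≤ ε := by
    rw [norm_smul, Real.norm_eq_abs, abs_of_pos htpos, ht, div_mul_eq_mul_div,
      div_le_iff₀ hvnorm, mul_comm]
    nlinarith [norm_nonneg x]
  have h1 := diff_mem u ε hε hsmall
  have h2 := snd_mem u ε hε (sqElem (u + t • x) - sqElem u)
  have h3 := Submodule.sub_mem _ h1 h2
  have key : ((t • x, sqElem (u + t • x) - sqElem u) : X × ↥(symTensorSpan X))
      - (0, sqElem (u + t • x) - sqElem u) = t • ((x, 0) : X × ↥(symTensorSpan X)) := by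
    apply Prod.ext <;> simp
  rw [key] at h3
  have := Submodule.smul_mem _ (t⁻¹) h3
  rwa [smul_smul, inv_mul_cancel₀ (ne_of_gt htpos), one_smul] at this

include hε in
lemma vectorSpan_diag_top : vectorSpan ℝ (diagSet u ε) = ⊤ := by
  rw [eq_top_iff]
  rintro ⟨x, σ⟩ -
  have := Submodule.add_mem _ (fst_mem u ε hε x) (snd_mem u ε hε σ)
  simpa using this

end Aux

/-- **Local convex hull of rank-one tensors has nonempty interior.**
Let `X` be a finite-dimensional real normed space and `S := span {v ⊗ v}` the subspace
of symmetric tensors.  For every `u ∈ X` and `ε > 0`, the convex hull of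
`{(u + v, (u + v) ⊗ (u + v)) : ‖v‖ ≤ ε}` has nonempty interior in `X × S`, the latter
carrying its unique finite-dimensional Hausdorff vector-space topology (here realized
by transporting along any linear equivalence onto a normed space `W`). -/
theorem interior_convexHull_diagonal_ball_nonempty
    {X : Type*} [NormedAddCommGroup X] [NormedSpace ℝ X] [FiniteDimensional ℝ X]
    (u : X) (ε : ℝ) (hε : 0 < ε)
    (W : Type*) [NormedAddCommGroup W] [NormedSpace ℝ W]
    (e : (X × ↥(symTensorSpan X)) ≃ₗ[ℝ] W) :
    (interior (e '' (convexHull ℝ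
      {p : X × ↥(symTensorSpan X) | ∃ v : X, ‖v‖ ≤ ε ∧ p.1 = u + v ∧
        (p.2 : X ⊗[ℝ] X) = (u + v) ⊗ₜ[ℝ] (u + v)}))).Nonempty := by
  haveI : FiniteDimensional ℝ W := e.finiteDimensional
  have hset : {p : X × ↥(symTensorSpan X) | ∃ v : X, ‖v‖ ≤ ε ∧ p.1 = u + v ∧
      (p.2 : X ⊗[ℝ] X) = (u + v) ⊗ₜ[ℝ] (u + v)} = diagSet u ε := rfl
  have hlin : IsLinearMap ℝ (⇑e : (X × ↥(symTensorSpan X)) → W) :=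
    ⟨fun a b => e.map_add a b, fun c a => e.map_smul c a⟩
  rw [hset, hlin.image_convexHull, interior_convexHull_nonempty_iff_affineSpan_eq_top]
  have hne : (diagSet u ε).Nonempty :=
    ⟨(u + 0, sqElem (u + 0)), mem_diagSet u ε (by simpa using le_of_lt hε)⟩
  have hspan : affineSpan ℝ (diagSet u ε) = ⊤ := by
    rw [AffineSubspace.affineSpan_eq_top_iff_vectorSpan_eq_top_of_nonempty ℝ _ _ hne]
    exact vectorSpan_diag_top u ε hε
  exact e.toLinearMap.toAffineMap.span_eq_top_of_surjective e.surjective hspan
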